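/- Let ω_c > 0, 0 < p < 1, and let S : [0,∞) → ℝ be Lebesgue integrable with S(ω) = ω^p · G(ω) on [0, ω_c), where G is twice differentiable on [0, ω_c), G'' is bounded on [0, ω_c), and G(0) ≠ 0, G'(0) ≠ 0. Define Γ(t) = ∫₀^∞ S(ω)(1 − cos(ωt))/ω² dω for t ≥ 0. Then there exist constants C₂, C₃ ∈ ℝ such that Γ(t) − C₂ − G(0)·C₃·t^{1−p} → 0 as t → ∞; moreover, if S(ω) ≥ 0 for all ω ≥ 0, then G(0)·C₃ > 0. -/

import Mathlib

open MeasureTheory Real Filter Set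

section Helpers

lemma hlp_one_sub_cos_le (x : ℝ) : 1 - Real.cos x ≤ x^2 / 2 := by
  have h1 : Real.sin (x/2)^2 ≤ (x/2)^2 := by
    have := Real.abs_sin_le_abs (x := x/2)
    nlinarith [abs_nonneg (Real.sin (x/2)), abs_nonneg (x/2), sq_abs (Real.sin (x/2)), sq_abs (x/2)]
  have h2 : Real.cos x = 2 * Real.cos (x/2)^2 - 1 := by
    have := Real.cos_two_mul (x/2)
    rwa [show 2*(x/2) = x by ring] at this
  have h3 : Real.sin (x/2)^2 + Real.cos (x/2)^2 = 1 := Real.sin_sq_add_cos_sq _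
  nlinarith

lemma hlp_one_sub_cos_nonneg (x : ℝ) : 0 ≤ 1 - Real.cos x := by
  nlinarith [Real.cos_le_one x]

lemma hlp_one_sub_cos_le_two (x : ℝ) : 1 - Real.cos x ≤ 2 := by
  nlinarith [Real.neg_one_le_cos x]

lemma hlp_rpow_meas_on {p : ℝ} {s : Set ℝ} (hs : s ⊆ Ioi 0) (hsm : MeasurableSet s) (g : ℝ → ℝ)
    (hg : ContinuousOn g s) :
    AEStronglyMeasurable (fun u : ℝ => u ^ p * g u) (volume.restrict s) := by
  apply ContinuousOn.aestronglyMeasurable _ hsm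
  intro u hu
  exact ((Real.continuousAt_rpow_const u _ (Or.inl (hs hu).ne')).continuousWithinAt).mul (hg u hu)

end Helpers

section RL

lemma hlp_rl_cos (f : ℝ → ℝ) (hf : Integrable f) :
    Tendsto (fun t : ℝ => ∫ x : ℝ, f x * Real.cos (x * t)) atTop (nhds 0) := by
  have hfc : Integrable (fun x : ℝ => (f x : ℂ)) := hf.ofReal
  have key : ∀ t : ℝ, ∫ x : ℝ, f x * Real.cos (x * t)
      = (FourierTransform.fourier (fun x : ℝ => (f x : ℂ)) (t / (2 * π))).re := by
    intro t
    rw [Real.fourier_real_eq_integral_exp_smul]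
    have hint : Integrable (fun v : ℝ => Complex.exp ((-2 * π * v * (t / (2 * π)) : ℝ) * Complex.I) • (f v : ℂ)) := by
      apply (hfc.norm.const_mul 1).mono'
      · apply AEStronglyMeasurable.smul (f := fun v : ℝ => Complex.exp ((-2 * π * v * (t / (2 * π)) : ℝ) * Complex.I)) _ hfc.aestronglyMeasurable
        apply (Complex.continuous_exp.comp ?_).aestronglyMeasurable
        continuity
      · filter_upwards with v
        simp only [norm_smul, Complex.norm_exp, one_mul,
          Complex.norm_real, Real.norm_eq_abs]
        have : ((( -2 * π * v * (t / (2 * π)) : ℝ) : ℂ) * Complex.I).re = 0 := by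
          rw [Complex.mul_I_re, Complex.ofReal_im, neg_zero]
        rw [this]
        simp
    have h2 : ∫ v : ℝ, (Complex.exp ((-2 * π * v * (t / (2 * π)) : ℝ) * Complex.I) • (f v : ℂ)).re
        = (∫ v : ℝ, Complex.exp ((-2 * π * v * (t / (2 * π)) : ℝ) * Complex.I) • (f v : ℂ)).re :=
      integral_re hint
    rw [← h2]
    congr 1; ext v
    have hne : (2 * π : ℝ) ≠ 0 := by positivity
    have harg : (-2 * π * v * (t / (2 * π)) : ℝ) = -(v * t) := by field_simp
    rw [harg]
    simp only [smul_eq_mul, Complex.mul_re, Complex.ofReal_re, Complex.ofReal_im,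
      Complex.exp_ofReal_mul_I_re, Complex.exp_ofReal_mul_I_im]
    simp [Real.cos_neg, mul_comm]
  have h3 : Tendsto (fun t : ℝ => t / (2 * π)) atTop atTop := by
    apply Tendsto.atTop_div_const (by positivity) tendsto_id
  have h4 : Tendsto (FourierTransform.fourier (fun x : ℝ => (f x : ℂ))) (Filter.cocompact ℝ) (nhds 0) :=
    Real.zero_at_infty_fourier _
  have h5 := h4.comp (h3.mono_right (by rw [cocompact_eq_atBot_atTop]; exact le_sup_right))
  have h6 := (Complex.continuous_re.tendsto 0).comp h5
  exact h6.congr fun t => (key t).symm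

lemma hlp_rl_cos_set (f : ℝ → ℝ) {s : Set ℝ} (hs : MeasurableSet s) (hf : IntegrableOn f s) :
    Tendsto (fun t : ℝ => ∫ x in s, f x * Real.cos (x * t)) atTop (nhds 0) := by
  have h := hlp_rl_cos (s.indicator f) (hf.integrable_indicator hs)
  apply h.congr
  intro t
  rw [← integral_indicator hs]
  congr 1; ext x
  by_cases hx : x ∈ s <;> simp [hx]

end RL

section Model

lemma hlp_f0_integrable {p : ℝ} (hp0 : 0 < p) (hp1 : p < 1) :
    IntegrableOn (fun u : ℝ => u ^ (p-2) * (1 - Real.cos u)) (Ioi 0) := by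
  have h1 : IntegrableOn (fun u : ℝ => u ^ (p-2) * (1 - Real.cos u)) (Ioo 0 1) := by
    apply Integrable.mono'
      (g := fun u : ℝ => (1/2 : ℝ) * u ^ p)
      (((intervalIntegral.integrableOn_Ioo_rpow_iff zero_lt_one).2 (by linarith : (-1:ℝ) < p)).const_mul _)
      (hlp_rpow_meas_on Ioo_subset_Ioi_self measurableSet_Ioo _ (by fun_prop))
    filter_upwards [ae_restrict_mem measurableSet_Ioo] with u hu
    have hu0 : (0:ℝ) < u := hu.1
    rw [Real.norm_eq_abs, abs_mul, abs_of_nonneg (Real.rpow_nonneg hu0.le _),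
      abs_of_nonneg (hlp_one_sub_cos_nonneg u)]
    calc u ^ (p-2) * (1 - Real.cos u) ≤ u ^ (p-2) * (u^2/2) :=
          mul_le_mul_of_nonneg_left (hlp_one_sub_cos_le u) (Real.rpow_nonneg hu0.le _)
      _ = 1/2 * u ^ p := by
          rw [show (u:ℝ)^2 = u ^ (2:ℝ) by rw [← Real.rpow_natCast u 2]; norm_num,
            show u ^ (p-2) * (u ^ (2:ℝ) / 2) = u ^ (p-2) * u ^ (2:ℝ) / 2 by ring,
            ← Real.rpow_add hu0]
          ring_nf
  have h2 : IntegrableOn (fun u : ℝ => u ^ (p-2) * (1 - Real.cos u)) (Ici 1) := by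
    rw [integrableOn_Ici_iff_integrableOn_Ioi]
    apply Integrable.mono'
      (g := fun u : ℝ => 2 * u ^ (p-2))
      ((integrableOn_Ioi_rpow_of_lt (by linarith : p-2 < (-1:ℝ)) zero_lt_one).const_mul _)
      (hlp_rpow_meas_on (fun u (hu : u ∈ Ioi (1:ℝ)) => lt_trans (show (0:ℝ) < 1 from zero_lt_one) hu) measurableSet_Ioi _ (by fun_prop))
    filter_upwards [ae_restrict_mem measurableSet_Ioi] with u hu
    have hu0 : (0:ℝ) < u := lt_trans zero_lt_one hu
    rw [Real.norm_eq_abs, abs_mul, abs_of_nonneg (Real.rpow_nonneg hu0.le _),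
      abs_of_nonneg (hlp_one_sub_cos_nonneg u)]
    calc u ^ (p-2) * (1 - Real.cos u) ≤ u ^ (p-2) * 2 :=
          mul_le_mul_of_nonneg_left (hlp_one_sub_cos_le_two u) (Real.rpow_nonneg hu0.le _)
      _ = 2 * u ^ (p-2) := by ring
  have : Ioo (0:ℝ) 1 ∪ Ici 1 = Ioi 0 := Ioo_union_Ici_eq_Ioi zero_lt_one
  rw [← this]
  exact h1.union h2

lemma hlp_cos_int_on {p : ℝ} (hp : p < -1) {X : ℝ} (hX : 0 < X) (g : ℝ → ℝ) (hgc : Continuous g)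
    (hgb : ∀ x, |g x| ≤ 1) :
    IntegrableOn (fun u : ℝ => u ^ p * g u) (Ioi X) := by
  apply Integrable.mono' (integrableOn_Ioi_rpow_of_lt hp hX)
    (hlp_rpow_meas_on (fun u hu => lt_trans hX hu) measurableSet_Ioi _ hgc.continuousOn)
  filter_upwards [ae_restrict_mem measurableSet_Ioi] with u hu
  have hu0 : (0:ℝ) < u := lt_trans hX hu
  rw [Real.norm_eq_abs, abs_mul, abs_of_nonneg (Real.rpow_nonneg hu0.le _)]
  calc u ^ p * |g u| ≤ u ^ p * 1 := mul_le_mul_of_nonneg_left (hgb u) (Real.rpow_nonneg hu0.le _)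
    _ = u ^ p := mul_one _

lemma hlp_f0_tail {p : ℝ} (hp0 : 0 < p) (hp1 : p < 1) {X : ℝ} (hX : 0 < X) :
    |(∫ u in Ioi X, u ^ (p-2) * (1 - Real.cos u)) - X^(p-1)/(1-p)| ≤ 2 * X^(p-2) := by
  have hplt : p - 2 < -1 := by linarith
  have hplt3 : p - 3 < -1 := by linarith
  have hint_pow : IntegrableOn (fun u : ℝ => u ^ (p-2)) (Ioi X) :=
    integrableOn_Ioi_rpow_of_lt hplt hX
  have hint_cos : IntegrableOn (fun u : ℝ => u ^ (p-2) * Real.cos u) (Ioi X) :=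
    hlp_cos_int_on hplt hX _ Real.continuous_cos (fun x => Real.abs_cos_le_one x)
  have hint_sin3 : IntegrableOn (fun u : ℝ => u ^ (p-3) * Real.sin u) (Ioi X) :=
    hlp_cos_int_on hplt3 hX _ Real.continuous_sin (fun x => Real.abs_sin_le_one x)
  have hsplit : (∫ u in Ioi X, u ^ (p-2) * (1 - Real.cos u))
      = (∫ u in Ioi X, u ^ (p-2)) - ∫ u in Ioi X, u ^ (p-2) * Real.cos u := by
    rw [← integral_sub hint_pow hint_cos]
    apply setIntegral_congr_fun measurableSet_Ioi
    intro u hu; ring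
  have hpow_val : (∫ u in Ioi X, u ^ (p-2)) = X^(p-1)/(1-p) := by
    rw [integral_Ioi_rpow_of_lt hplt hX]
    rw [show p - 2 + 1 = p - 1 by ring, div_eq_div_iff (by linarith : p - 1 ≠ 0) (by linarith : 1 - p ≠ 0)]
    ring
  have hder : ∀ x ∈ Ioi X, HasDerivAt (fun u : ℝ => u ^ (p-2) * Real.sin u)
      ((p-2) * x ^ (p-3) * Real.sin x + x ^ (p-2) * Real.cos x) x := by
    intro x hx
    have hx0 : (0:ℝ) < x := lt_trans hX hx
    have h1 : HasDerivAt (fun u : ℝ => u ^ (p-2)) ((p-2) * x ^ (p-2-1)) x :=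
      Real.hasDerivAt_rpow_const (Or.inl hx0.ne')
    have h2 : HasDerivAt Real.sin (Real.cos x) x := Real.hasDerivAt_sin x
    have h3 := h1.mul h2
    rw [show p - 2 - 1 = p - 3 by ring] at h3
    convert h3 using 1 <;> rfl
  have htend : Tendsto (fun u : ℝ => u ^ (p-2) * Real.sin u) atTop (nhds 0) := by
    have hg0 : Tendsto (fun u : ℝ => u ^ (p-2)) atTop (nhds 0) := by
      have := tendsto_rpow_neg_atTop (y := 2 - p) (by linarith)
      simpa [show -(2-p) = p - 2 by ring] using this
    apply squeeze_zero_norm' ?_ hg0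
    · filter_upwards [eventually_gt_atTop (0:ℝ)] with u hu
      rw [Real.norm_eq_abs, abs_mul, abs_of_nonneg (Real.rpow_nonneg hu.le _)]
      calc u ^ (p-2) * |Real.sin u| ≤ u ^ (p-2) * 1 :=
            mul_le_mul_of_nonneg_left (Real.abs_sin_le_one u) (Real.rpow_nonneg hu.le _)
        _ = u ^ (p-2) := mul_one _
  set F' : ℝ → ℝ := fun x => (p-2) * x ^ (p-3) * Real.sin x + x ^ (p-2) * Real.cos x with hF'
  have hint_sin3' : IntegrableOn (fun x : ℝ => (p-2) * x ^ (p-3) * Real.sin x) (Ioi X) := by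
    have h := hint_sin3.const_mul (p-2)
    exact h.congr (Filter.Eventually.of_forall fun x => by ring)
  have hF'int : IntegrableOn F' (Ioi X) := hint_sin3'.add hint_cos
  have hcont : ContinuousWithinAt (fun u : ℝ => u ^ (p-2) * Real.sin u) (Ici X) X :=
    (((Real.continuousAt_rpow_const X _ (Or.inl hX.ne')).mul
      Real.continuous_sin.continuousAt)).continuousWithinAt
  have hIBP : (∫ x in Ioi X, F' x) = 0 - X ^ (p-2) * Real.sin X :=
    integral_Ioi_of_hasDerivAt_of_tendsto hcont hder hF'int htend
  have hsum : (∫ x in Ioi X, F' x)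
      = (p-2) * (∫ x in Ioi X, x ^ (p-3) * Real.sin x) + ∫ x in Ioi X, x ^ (p-2) * Real.cos x := by
    rw [hF', integral_add hint_sin3' hint_cos]
    congr 1
    rw [← MeasureTheory.integral_const_mul]
    apply setIntegral_congr_fun measurableSet_Ioi
    intro x _; ring
  have hEcos : (∫ x in Ioi X, x ^ (p-2) * Real.cos x)
      = - (X ^ (p-2) * Real.sin X) - (p-2) * (∫ x in Ioi X, x ^ (p-3) * Real.sin x) := by
    rw [hsum] at hIBP
    linarith [hIBP]
  have hIs : |∫ x in Ioi X, x ^ (p-3) * Real.sin x| ≤ X ^ (p-2) / (2-p) := by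
    have hae : ∀ᵐ x ∂(volume.restrict (Ioi X)),
        ‖x ^ (p-3) * Real.sin x‖ ≤ x ^ (p-3) := by
      filter_upwards [ae_restrict_mem measurableSet_Ioi] with x hx
      have hx0 : (0:ℝ) < x := lt_trans hX hx
      rw [Real.norm_eq_abs, abs_mul, abs_of_nonneg (Real.rpow_nonneg hx0.le _)]
      calc x ^ (p-3) * |Real.sin x| ≤ x ^ (p-3) * 1 :=
            mul_le_mul_of_nonneg_left (Real.abs_sin_le_one x) (Real.rpow_nonneg hx0.le _)
        _ = x ^ (p-3) := mul_one _
    have hb := norm_integral_le_of_norm_le (integrableOn_Ioi_rpow_of_lt hplt3 hX) hae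
    rw [Real.norm_eq_abs] at hb
    calc |∫ x in Ioi X, x ^ (p-3) * Real.sin x| ≤ ∫ x in Ioi X, x ^ (p-3) := hb
      _ = X ^ (p-2) / (2-p) := by
          rw [integral_Ioi_rpow_of_lt hplt3 hX, show p - 3 + 1 = p - 2 by ring,
            div_eq_div_iff (by linarith : p - 2 ≠ 0) (by linarith : 2 - p ≠ 0)]
          ring
  rw [hsplit, hpow_val, show X^(p-1)/(1-p) - (∫ u in Ioi X, u ^ (p-2) * Real.cos u) - X^(p-1)/(1-p)
      = -(∫ u in Ioi X, u ^ (p-2) * Real.cos u) by ring, abs_neg, hEcos]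
  have hXp : (0:ℝ) ≤ X ^ (p-2) := Real.rpow_nonneg hX.le _
  have h1 : |-(X ^ (p-2) * Real.sin X)| ≤ X ^ (p-2) := by
    rw [abs_neg, abs_mul, abs_of_nonneg hXp]
    calc X ^ (p-2) * |Real.sin X| ≤ X ^ (p-2) * 1 :=
          mul_le_mul_of_nonneg_left (Real.abs_sin_le_one X) hXp
      _ = X ^ (p-2) := mul_one _
  have h2 : |(p-2) * (∫ x in Ioi X, x ^ (p-3) * Real.sin x)| ≤ X ^ (p-2) := by
    rw [abs_mul, abs_of_nonpos (by linarith : p - 2 ≤ 0)]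
    have : -(p-2) * |∫ x in Ioi X, x ^ (p-3) * Real.sin x| ≤ (2-p) * (X ^ (p-2)/(2-p)) := by
      rw [show -(p-2) = 2 - p by ring]
      exact mul_le_mul_of_nonneg_left hIs (by linarith)
    rw [mul_div_cancel₀ _ (by linarith : (2:ℝ) - p ≠ 0)] at this
    exact this
  calc |-(X ^ (p-2) * Real.sin X) - (p-2) * (∫ x in Ioi X, x ^ (p-3) * Real.sin x)|
      ≤ |-(X ^ (p-2) * Real.sin X)| + |(p-2) * (∫ x in Ioi X, x ^ (p-3) * Real.sin x)| := abs_sub _ _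
    _ ≤ X ^ (p-2) + X ^ (p-2) := add_le_add h1 h2
    _ = 2 * X ^ (p-2) := by ring

lemma hlp_scale_eq {p T : ℝ} (hT : 0 < T) {t : ℝ} (ht : 0 < t) :
    (∫ ω in Ioo (0:ℝ) T, ω ^ (p-2) * (1 - Real.cos (ω * t)))
      = t ^ (1-p) * ∫ u in Ioo (0:ℝ) (T*t), u ^ (p-2) * (1 - Real.cos u) := by
  have hTt : (0:ℝ) < T * t := mul_pos hT ht
  rw [← integral_Ioc_eq_integral_Ioo, ← intervalIntegral.integral_of_le hT.le,
    ← integral_Ioc_eq_integral_Ioo, ← intervalIntegral.integral_of_le hTt.le]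
  have step1 : (∫ ω in (0:ℝ)..T, ω ^ (p-2) * (1 - Real.cos (ω * t)))
      = ∫ ω in (0:ℝ)..T, t ^ (2-p) * ((ω*t) ^ (p-2) * (1 - Real.cos (ω * t))) := by
    apply intervalIntegral.integral_congr
    intro ω hω
    rw [uIcc_of_le hT.le] at hω
    rcases eq_or_lt_of_le hω.1 with h0 | h0
    · rw [← h0]; simp
    · simp only []
      rw [Real.mul_rpow h0.le ht.le]
      rw [show t ^ (2-p) * (ω ^ (p-2) * t ^ (p-2) * (1 - Real.cos (ω*t)))
          = (t ^ (2-p) * t ^ (p-2)) * (ω ^ (p-2) * (1 - Real.cos (ω*t))) by ring,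
        ← Real.rpow_add ht, show (2-p) + (p-2) = 0 by ring, Real.rpow_zero, one_mul]
  rw [step1, intervalIntegral.integral_const_mul,
    intervalIntegral.integral_comp_mul_right (fun u => u ^ (p-2) * (1 - Real.cos u)) ht.ne',
    zero_mul]
  rw [smul_eq_mul, ← mul_assoc]
  congr 1
  rw [← Real.rpow_neg_one t, ← Real.rpow_add ht, show (2-p) + (-1:ℝ) = 1 - p by ring]

end Model
set_option maxHeartbeats 1000000 in
/-- **Trushechkin's theorem, case `0 < p < 1`.**
If `S` is integrable on `[0,∞)` and factors as `S ω = ω^p G ω` on `[0, ω_c)` with `G` twice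
differentiable on `[0, ω_c)`, `G''` bounded there, and `G 0 ≠ 0`, `G' 0 ≠ 0`, then there are
constants `C₂, C₃` such that `Γ t - C₂ - G 0 · C₃ · t^(1-p) → 0` as `t → ∞`, where
`Γ t = ∫₀^∞ S ω (1 - cos (ω t)) / ω² dω`; moreover if `S ≥ 0` then `G 0 · C₃ > 0`. -/
theorem trushechkin_case_p_between_zero_one
    (ωc p : ℝ) (hωc : 0 < ωc) (hp0 : 0 < p) (hp1 : p < 1)
    (S G G' G'' : ℝ → ℝ)
    (hS_int : IntegrableOn S (Ici 0))
    (hfact : ∀ ω ∈ Ico 0 ωc, S ω = ω ^ p * G ω)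
    (hG' : ∀ ω ∈ Ico 0 ωc, HasDerivWithinAt G (G' ω) (Ico 0 ωc) ω)
    (hG'' : ∀ ω ∈ Ico 0 ωc, HasDerivWithinAt G' (G'' ω) (Ico 0 ωc) ω)
    (hG''bd : ∃ M : ℝ, ∀ ω ∈ Ico 0 ωc, |G'' ω| ≤ M)
    (hG0 : G 0 ≠ 0) (hG'0 : G' 0 ≠ 0) :
    ∃ C₂ C₃ : ℝ,
      Tendsto (fun t : ℝ =>
          (∫ ω in Ioi (0:ℝ), S ω * (1 - Real.cos (ω * t)) / ω ^ 2)
            - C₂ - G 0 * C₃ * t ^ (1 - p))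
        atTop (nhds 0) ∧
      ((∀ ω ≥ (0:ℝ), 0 ≤ S ω) → 0 < G 0 * C₃) := by
  obtain ⟨M₀, hM₀⟩ := hG''bd
  set M : ℝ := max M₀ 0 with hMdef
  have hMnn : 0 ≤ M := le_max_right _ _
  have hM : ∀ ω ∈ Ico 0 ωc, |G'' ω| ≤ M := fun ω h => (hM₀ ω h).trans (le_max_left _ _)
  set R : ℝ → ℝ := fun ω => G ω - G 0 - G' 0 * ω with hRdef
  have hf₀int : IntegrableOn (fun u : ℝ => u ^ (p-2) * (1 - Real.cos u)) (Ioi 0) :=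
    hlp_f0_integrable hp0 hp1
  set C₃ : ℝ := ∫ u in Ioi (0:ℝ), u ^ (p-2) * (1 - Real.cos u) with hC₃def
  -- continuity of G and R on the interval
  have hGcont : ContinuousOn G (Ico 0 ωc) := fun ω h => (hG' ω h).continuousWithinAt
  have hRcont : ContinuousOn R (Ico 0 ωc) := by
    apply (hGcont.sub continuousOn_const).sub (continuousOn_const.mul continuousOn_id)
  -- Taylor bound |R ω| ≤ M ω²
  have hG'bd : ∀ s ∈ Ico 0 ωc, |G' s - G' 0| ≤ M * s := by
    intro s hs
    have h0 : (0:ℝ) ∈ Ico 0 ωc := ⟨le_refl _, hωc⟩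
    have := Convex.norm_image_sub_le_of_norm_hasDerivWithin_le hG''
      (fun x hx => by rw [Real.norm_eq_abs]; exact hM x hx) (convex_Ico 0 ωc) h0 hs
    rwa [Real.norm_eq_abs, Real.norm_eq_abs, sub_zero, abs_of_nonneg hs.1] at this
  have hRbd : ∀ ω ∈ Ico 0 ωc, |R ω| ≤ M * ω^2 := by
    intro ω hω
    have hsub : Icc (0:ℝ) ω ⊆ Ico 0 ωc := fun x hx => ⟨hx.1, lt_of_le_of_lt hx.2 hω.2⟩
    have hder : ∀ x ∈ Icc (0:ℝ) ω, HasDerivWithinAt R (G' x - G' 0) (Icc 0 ω) x := by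
      intro x hx
      have h1 : HasDerivWithinAt G (G' x) (Icc 0 ω) x := ((hG' x (hsub hx)).mono hsub)
      have h2 : HasDerivWithinAt (fun w : ℝ => G' 0 * w) (G' 0) (Icc 0 ω) x := by
        simpa using (hasDerivWithinAt_id x (Icc 0 ω)).const_mul (G' 0)
      exact (h1.sub_const (G 0)).sub h2
    have hbd : ∀ x ∈ Icc (0:ℝ) ω, ‖G' x - G' 0‖ ≤ M * ω := by
      intro x hx
      rw [Real.norm_eq_abs]
      exact (hG'bd x (hsub hx)).trans (mul_le_mul_of_nonneg_left hx.2 hMnn)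
    have h0 : (0:ℝ) ∈ Icc 0 ω := ⟨le_refl _, hω.1⟩
    have hωm : ω ∈ Icc (0:ℝ) ω := ⟨hω.1, le_refl _⟩
    have := Convex.norm_image_sub_le_of_norm_hasDerivWithin_le hder hbd (convex_Icc 0 ω) h0 hωm
    have hR0 : R 0 = 0 := by rw [hRdef]; simp
    rw [hR0, sub_zero, sub_zero, Real.norm_eq_abs, Real.norm_eq_abs, abs_of_nonneg hω.1] at this
    calc |R ω| ≤ M * ω * ω := this
      _ = M * ω^2 := by ring
  -- power identities
  have e1 : ∀ ω : ℝ, 0 < ω → ω^(p-2) * ω^2 = ω^p := by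
    intro ω hω
    rw [show (ω:ℝ)^2 = ω^(2:ℝ) by rw [← Real.rpow_natCast ω 2]; norm_num,
      ← Real.rpow_add hω, show p - 2 + 2 = p by ring]
  have e2 : ∀ ω : ℝ, 0 < ω → ω^(p-1) * ω^2 = ω^p * ω := by
    intro ω hω
    rw [show (ω:ℝ)^2 = ω^(2:ℝ) by rw [← Real.rpow_natCast ω 2]; norm_num,
      ← Real.rpow_add hω, ← Real.rpow_add_one hω.ne', show p - 1 + 2 = p + 1 by ring]
  -- key pointwise identity on Ioo 0 ωc
  have key : ∀ t : ℝ, ∀ ω ∈ Ioo (0:ℝ) ωc,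
      S ω * (1 - Real.cos (ω*t)) / ω^2
        = G 0 * (ω^(p-2) * (1 - Real.cos (ω*t)))
          + G' 0 * (ω^(p-1) * (1 - Real.cos (ω*t)))
          + (ω^(p-2) * R ω) * (1 - Real.cos (ω*t)) := by
    intro t ω hω
    have hω0 : (0:ℝ) < ω := hω.1
    have hGG : G ω = G 0 + G' 0 * ω + R ω := by rw [hRdef]; ring
    rw [hfact ω ⟨hω0.le, hω.2⟩, hGG, div_eq_iff (pow_ne_zero 2 hω0.ne')]
    linear_combination (-(G 0 + R ω) * (1 - Real.cos (ω*t))) * (e1 ω hω0)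
      + (-(G' 0 * (1 - Real.cos (ω*t)))) * (e2 ω hω0)
  -- basic integrability on Ioo 0 ωc
  have hIooIoi : Ioo (0:ℝ) ωc ⊆ Ioi 0 := Ioo_subset_Ioi_self
  have ipow_p : IntegrableOn (fun ω : ℝ => ω^p) (Ioo 0 ωc) :=
    (intervalIntegral.integrableOn_Ioo_rpow_iff hωc).2 (by linarith)
  have i1 : IntegrableOn (fun ω : ℝ => ω^(p-1)) (Ioo 0 ωc) :=
    (intervalIntegral.integrableOn_Ioo_rpow_iff hωc).2 (by linarith)
  have ib0 : ∀ t : ℝ, IntegrableOn (fun ω : ℝ => ω^(p-2) * (1 - Real.cos (ω*t))) (Ioo 0 ωc) := by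
    intro t
    apply Integrable.mono' (ipow_p.const_mul (t^2/2))
      (hlp_rpow_meas_on hIooIoi measurableSet_Ioo _ (by fun_prop))
    filter_upwards [ae_restrict_mem measurableSet_Ioo] with ω hω
    have hω0 : (0:ℝ) < ω := hω.1
    rw [Real.norm_eq_abs, abs_mul, abs_of_nonneg (Real.rpow_nonneg hω0.le _),
      abs_of_nonneg (hlp_one_sub_cos_nonneg _)]
    calc ω ^ (p-2) * (1 - Real.cos (ω*t)) ≤ ω ^ (p-2) * ((ω*t)^2/2) :=
          mul_le_mul_of_nonneg_left (hlp_one_sub_cos_le _) (Real.rpow_nonneg hω0.le _)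
      _ = t^2/2 * (ω^(p-2) * ω^2) := by ring
      _ = t^2/2 * ω^p := by rw [e1 ω hω0]
  have ib1 : ∀ t : ℝ, IntegrableOn (fun ω : ℝ => ω^(p-1) * (1 - Real.cos (ω*t))) (Ioo 0 ωc) := by
    intro t
    apply Integrable.mono' (i1.const_mul 2)
      (hlp_rpow_meas_on hIooIoi measurableSet_Ioo _ (by fun_prop))
    filter_upwards [ae_restrict_mem measurableSet_Ioo] with ω hω
    have hω0 : (0:ℝ) < ω := hω.1
    rw [Real.norm_eq_abs, abs_mul, abs_of_nonneg (Real.rpow_nonneg hω0.le _),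
      abs_of_nonneg (hlp_one_sub_cos_nonneg _)]
    calc ω ^ (p-1) * (1 - Real.cos (ω*t)) ≤ ω ^ (p-1) * 2 :=
          mul_le_mul_of_nonneg_left (hlp_one_sub_cos_le_two _) (Real.rpow_nonneg hω0.le _)
      _ = 2 * ω^(p-1) := by ring
  have iRmeas : ∀ g : ℝ → ℝ, Continuous g → AEStronglyMeasurable
      (fun ω : ℝ => ω^(p-2) * R ω * g ω) (volume.restrict (Ioo 0 ωc)) := by
    intro g hg
    have := hlp_rpow_meas_on (p := p - 2) hIooIoi measurableSet_Ioo (fun ω => R ω * g ω)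
      ((hRcont.mono Ioo_subset_Ico_self).mul hg.continuousOn)
    exact this.congr (ae_of_all _ fun x => by ring)
  have iRbound : ∀ t : ℝ, ∀ᵐ ω ∂(volume.restrict (Ioo (0:ℝ) ωc)),
      ‖ω^(p-2) * R ω * (1 - Real.cos (ω*t))‖ ≤ 2*M * ω^p := by
    intro t
    filter_upwards [ae_restrict_mem measurableSet_Ioo] with ω hω
    have hω0 : (0:ℝ) < ω := hω.1
    have hRb := hRbd ω ⟨hω0.le, hω.2⟩
    rw [Real.norm_eq_abs, abs_mul, abs_mul, abs_of_nonneg (Real.rpow_nonneg hω0.le _),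
      abs_of_nonneg (hlp_one_sub_cos_nonneg _)]
    calc ω ^ (p-2) * |R ω| * (1 - Real.cos (ω*t))
        ≤ ω ^ (p-2) * (M * ω^2) * 2 := by
          apply mul_le_mul (mul_le_mul_of_nonneg_left hRb (Real.rpow_nonneg hω0.le _))
            (hlp_one_sub_cos_le_two _) (hlp_one_sub_cos_nonneg _)
          positivity
      _ = 2*M * (ω^(p-2) * ω^2) := by ring
      _ = 2*M * ω^p := by rw [e1 ω hω0]
  have ibR : ∀ t : ℝ, IntegrableOn (fun ω : ℝ => ω^(p-2) * R ω * (1 - Real.cos (ω*t))) (Ioo 0 ωc) := by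
    intro t
    exact Integrable.mono' (ipow_p.const_mul (2*M)) (iRmeas _ (by fun_prop)) (iRbound t)
  have iR : IntegrableOn (fun ω : ℝ => ω^(p-2) * R ω) (Ioo 0 ωc) := by
    apply Integrable.mono' (ipow_p.const_mul M)
      ((iRmeas (fun _ => (1:ℝ)) continuous_const).congr (ae_of_all _ fun x => by simp))
    filter_upwards [ae_restrict_mem measurableSet_Ioo] with ω hω
    have hω0 : (0:ℝ) < ω := hω.1
    have hRb := hRbd ω ⟨hω0.le, hω.2⟩
    rw [Real.norm_eq_abs, abs_mul, abs_of_nonneg (Real.rpow_nonneg hω0.le _)]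
    calc ω ^ (p-2) * |R ω| ≤ ω ^ (p-2) * (M * ω^2) :=
          mul_le_mul_of_nonneg_left hRb (Real.rpow_nonneg hω0.le _)
      _ = M * (ω^(p-2) * ω^2) := by ring
      _ = M * ω^p := by rw [e1 ω hω0]
  have i1cos : ∀ t : ℝ, IntegrableOn (fun ω : ℝ => ω^(p-1) * Real.cos (ω*t)) (Ioo 0 ωc) := by
    intro t
    apply Integrable.mono' i1 (hlp_rpow_meas_on hIooIoi measurableSet_Ioo _ (by fun_prop))
    filter_upwards [ae_restrict_mem measurableSet_Ioo] with ω hω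
    have hω0 : (0:ℝ) < ω := hω.1
    rw [Real.norm_eq_abs, abs_mul, abs_of_nonneg (Real.rpow_nonneg hω0.le _)]
    calc ω ^ (p-1) * |Real.cos (ω*t)| ≤ ω ^ (p-1) * 1 :=
          mul_le_mul_of_nonneg_left (Real.abs_cos_le_one _) (Real.rpow_nonneg hω0.le _)
      _ = ω ^ (p-1) := mul_one _
  have iRcos : ∀ t : ℝ, IntegrableOn (fun ω : ℝ => ω^(p-2) * R ω * Real.cos (ω*t)) (Ioo 0 ωc) := by
    intro t
    apply Integrable.mono' (ipow_p.const_mul M) (iRmeas _ (by fun_prop))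
    filter_upwards [ae_restrict_mem measurableSet_Ioo] with ω hω
    have hω0 : (0:ℝ) < ω := hω.1
    have hRb := hRbd ω ⟨hω0.le, hω.2⟩
    rw [Real.norm_eq_abs, abs_mul, abs_mul, abs_of_nonneg (Real.rpow_nonneg hω0.le _)]
    calc ω ^ (p-2) * |R ω| * |Real.cos (ω*t)|
        ≤ ω ^ (p-2) * (M * ω^2) * 1 := by
          apply mul_le_mul (mul_le_mul_of_nonneg_left hRb (Real.rpow_nonneg hω0.le _))
            (Real.abs_cos_le_one _) (abs_nonneg _)
          positivity
      _ = M * (ω^(p-2) * ω^2) := by ring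
      _ = M * ω^p := by rw [e1 ω hω0]
  -- integrability on the tail [ωc, ∞)
  have hSint' : IntegrableOn S (Ici ωc) := hS_int.mono_set (Ici_subset_Ici.mpr hωc.le)
  have iBconst : IntegrableOn (fun ω : ℝ => S ω / ω^2) (Ici ωc) := by
    apply Integrable.mono' (hSint'.abs.div_const (ωc^2))
      ((hSint'.aestronglyMeasurable.mul
        (((continuous_pow 2).measurable.inv).aestronglyMeasurable)).congr
        (ae_of_all _ fun x => (div_eq_mul_inv (S x) (x^2)).symm))
    filter_upwards [ae_restrict_mem measurableSet_Ici] with ω hω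
    have hω0 : (0:ℝ) < ω := lt_of_lt_of_le hωc hω
    rw [Real.norm_eq_abs, abs_div, abs_of_nonneg (by positivity : (0:ℝ) ≤ ω^2)]
    have hωle : ωc ≤ ω := hω
    have h2 : ωc^2 ≤ ω^2 := by nlinarith
    gcongr
  have iBcos : ∀ t : ℝ, IntegrableOn (fun ω : ℝ => (S ω / ω^2) * Real.cos (ω*t)) (Ici ωc) := by
    intro t
    apply Integrable.mono' iBconst.abs
      (iBconst.aestronglyMeasurable.mul (by fun_prop : Continuous fun ω : ℝ => Real.cos (ω*t)).aestronglyMeasurable)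
    filter_upwards with ω
    simp only [Pi.mul_apply]
    rw [Real.norm_eq_abs, abs_mul]
    calc |S ω / ω^2| * |Real.cos (ω*t)| ≤ |S ω / ω^2| * 1 :=
          mul_le_mul_of_nonneg_left (Real.abs_cos_le_one _) (abs_nonneg _)
      _ = |S ω / ω^2| := mul_one _
  have iB : ∀ t : ℝ, IntegrableOn (fun ω : ℝ => S ω * (1 - Real.cos (ω*t)) / ω^2) (Ici ωc) := by
    intro t
    apply IntegrableOn.congr_fun (iBconst.sub (iBcos t)) _ measurableSet_Ici
    intro ω _
    simp only [Pi.sub_apply]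
    ring
  -- identities for the tail part
  have idB : ∀ t : ℝ, (∫ ω in Ici ωc, S ω * (1 - Real.cos (ω*t)) / ω^2)
      = (∫ ω in Ici ωc, S ω / ω^2) - ∫ ω in Ici ωc, (S ω / ω^2) * Real.cos (ω*t) := by
    intro t
    rw [← integral_sub iBconst (iBcos t)]
    apply setIntegral_congr_fun measurableSet_Ici
    intro ω _
    ring
  -- identities on (0, ωc)
  have id1 : ∀ t : ℝ, (∫ ω in Ioo (0:ℝ) ωc, ω^(p-1) * (1 - Real.cos (ω*t)))
      = (∫ ω in Ioo (0:ℝ) ωc, ω^(p-1)) - ∫ ω in Ioo (0:ℝ) ωc, ω^(p-1) * Real.cos (ω*t) := by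
    intro t
    rw [← integral_sub i1 (i1cos t)]
    apply setIntegral_congr_fun measurableSet_Ioo
    intro ω _
    ring
  have idR : ∀ t : ℝ, (∫ ω in Ioo (0:ℝ) ωc, ω^(p-2) * R ω * (1 - Real.cos (ω*t)))
      = (∫ ω in Ioo (0:ℝ) ωc, ω^(p-2) * R ω) - ∫ ω in Ioo (0:ℝ) ωc, ω^(p-2) * R ω * Real.cos (ω*t) := by
    intro t
    rw [← integral_sub iR (iRcos t)]
    apply setIntegral_congr_fun measurableSet_Ioo
    intro ω _
    ring
  have v1 : (∫ ω in Ioo (0:ℝ) ωc, ω^(p-1)) = ωc^p / p := by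
    rw [← integral_Ioc_eq_integral_Ioo, ← intervalIntegral.integral_of_le hωc.le,
      integral_rpow (Or.inl (by linarith : (-1:ℝ) < p - 1))]
    rw [show p - 1 + 1 = p by ring, Real.zero_rpow hp0.ne']
    ring
  -- splitting Γ
  have hdisj : ∀ X : ℝ, Disjoint (Ioo (0:ℝ) X) (Ici X) :=
    fun X => Set.disjoint_left.mpr (fun a ha hb => absurd hb (not_le.mpr ha.2))
  have iIooF : ∀ t : ℝ, IntegrableOn (fun ω : ℝ => S ω * (1 - Real.cos (ω*t)) / ω^2) (Ioo 0 ωc) := by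
    intro t
    apply IntegrableOn.congr_fun
      ((((ib0 t).const_mul (G 0)).add ((ib1 t).const_mul (G' 0))).add (ibR t))
      _ measurableSet_Ioo
    intro ω hω
    exact (key t ω hω).symm
  have idΓ : ∀ t : ℝ, (∫ ω in Ioi (0:ℝ), S ω * (1 - Real.cos (ω*t)) / ω^2)
      = (∫ ω in Ioo (0:ℝ) ωc, S ω * (1 - Real.cos (ω*t)) / ω^2)
        + ∫ ω in Ici ωc, S ω * (1 - Real.cos (ω*t)) / ω^2 := by
    intro t
    rw [← Ioo_union_Ici_eq_Ioi hωc]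
    exact setIntegral_union (hdisj ωc) measurableSet_Ici (iIooF t) (iB t)
  have idIoo : ∀ t : ℝ, (∫ ω in Ioo (0:ℝ) ωc, S ω * (1 - Real.cos (ω*t)) / ω^2)
      = G 0 * (∫ ω in Ioo (0:ℝ) ωc, ω^(p-2) * (1 - Real.cos (ω*t)))
        + G' 0 * (∫ ω in Ioo (0:ℝ) ωc, ω^(p-1) * (1 - Real.cos (ω*t)))
        + ∫ ω in Ioo (0:ℝ) ωc, ω^(p-2) * R ω * (1 - Real.cos (ω*t)) := by
    intro t
    have tA : (∫ ω in Ioo (0:ℝ) ωc,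
        (G 0 * (ω^(p-2) * (1 - Real.cos (ω*t))) + G' 0 * (ω^(p-1) * (1 - Real.cos (ω*t)))
          + ω^(p-2) * R ω * (1 - Real.cos (ω*t))))
        = (∫ ω in Ioo (0:ℝ) ωc,
            (G 0 * (ω^(p-2) * (1 - Real.cos (ω*t))) + G' 0 * (ω^(p-1) * (1 - Real.cos (ω*t)))))
          + ∫ ω in Ioo (0:ℝ) ωc, ω^(p-2) * R ω * (1 - Real.cos (ω*t)) :=
      integral_add (((ib0 t).const_mul (G 0)).add ((ib1 t).const_mul (G' 0))) (ibR t)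
    have tB : (∫ ω in Ioo (0:ℝ) ωc,
        (G 0 * (ω^(p-2) * (1 - Real.cos (ω*t))) + G' 0 * (ω^(p-1) * (1 - Real.cos (ω*t)))))
        = (∫ ω in Ioo (0:ℝ) ωc, G 0 * (ω^(p-2) * (1 - Real.cos (ω*t))))
          + ∫ ω in Ioo (0:ℝ) ωc, G' 0 * (ω^(p-1) * (1 - Real.cos (ω*t))) :=
      integral_add ((ib0 t).const_mul (G 0)) ((ib1 t).const_mul (G' 0))
    rw [setIntegral_congr_fun measurableSet_Ioo (key t), tA, tB,
      MeasureTheory.integral_const_mul, MeasureTheory.integral_const_mul]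
  -- splitting of C₃ at a positive point
  have hC₃split : ∀ X : ℝ, 0 < X →
      C₃ = (∫ u in Ioo (0:ℝ) X, u ^ (p-2) * (1 - Real.cos u))
        + ∫ u in Ioi X, u ^ (p-2) * (1 - Real.cos u) := by
    intro X hX
    rw [hC₃def, ← Ioo_union_Ici_eq_Ioi hX,
      setIntegral_union (hdisj X) measurableSet_Ici
        (hf₀int.mono_set (Ioo_subset_Ioi_self))
        (hf₀int.mono_set (fun u hu => lt_of_lt_of_le hX hu)),
      integral_Ici_eq_integral_Ioi]
  have cB : Tendsto (fun t : ℝ => ∫ ω in Ici ωc, (S ω / ω^2) * Real.cos (ω*t)) atTop (nhds 0) :=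
    hlp_rl_cos_set _ measurableSet_Ici iBconst
  have c1 : Tendsto (fun t : ℝ => ∫ ω in Ioo (0:ℝ) ωc, ω^(p-1) * Real.cos (ω*t)) atTop (nhds 0) :=
    hlp_rl_cos_set _ measurableSet_Ioo i1
  have cR : Tendsto (fun t : ℝ => ∫ ω in Ioo (0:ℝ) ωc, ω^(p-2) * R ω * Real.cos (ω*t)) atTop (nhds 0) :=
    hlp_rl_cos_set _ measurableSet_Ioo iR
  have c0 : Tendsto (fun t : ℝ =>
      t^(1-p) * (∫ u in Ioi (ωc*t), u ^ (p-2) * (1 - Real.cos u)) - ωc^(p-1)/(1-p))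
      atTop (nhds 0) := by
    have hlim : Tendsto (fun t : ℝ => 2*ωc^(p-2) * t⁻¹) atTop (nhds 0) := by
      simpa using tendsto_inv_atTop_zero.const_mul (2*ωc^(p-2))
    apply squeeze_zero_norm' ?_ hlim
    filter_upwards [eventually_gt_atTop (0:ℝ)] with t ht
    have hX : 0 < ωc * t := mul_pos hωc ht
    have htail := hlp_f0_tail hp0 hp1 hX
    have hconst : t^(1-p) * ((ωc*t)^(p-1)/(1-p)) = ωc^(p-1)/(1-p) := by
      rw [Real.mul_rpow hωc.le ht.le,
        show t^(1-p) * (ωc^(p-1) * t^(p-1) / (1-p)) = (t^(1-p) * t^(p-1)) * ωc^(p-1)/(1-p) by ring,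
        ← Real.rpow_add ht, show (1-p) + (p-1) = 0 by ring, Real.rpow_zero, one_mul]
    have hfac : t^(1-p) * (∫ u in Ioi (ωc*t), u ^ (p-2) * (1 - Real.cos u)) - ωc^(p-1)/(1-p)
        = t^(1-p) * ((∫ u in Ioi (ωc*t), u ^ (p-2) * (1 - Real.cos u)) - (ωc*t)^(p-1)/(1-p)) := by
      rw [mul_sub, hconst]
    rw [Real.norm_eq_abs, hfac, abs_mul, abs_of_nonneg (Real.rpow_nonneg ht.le _)]
    calc t^(1-p) * |(∫ u in Ioi (ωc*t), u ^ (p-2) * (1 - Real.cos u)) - (ωc*t)^(p-1)/(1-p)|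
        ≤ t^(1-p) * (2*(ωc*t)^(p-2)) :=
          mul_le_mul_of_nonneg_left htail (Real.rpow_nonneg ht.le _)
      _ = 2*ωc^(p-2) * t⁻¹ := by
          rw [Real.mul_rpow hωc.le ht.le,
            show t^(1-p) * (2*(ωc^(p-2)*t^(p-2))) = 2*ωc^(p-2)*(t^(1-p)*t^(p-2)) by ring,
            ← Real.rpow_add ht, show (1-p)+(p-2) = (-1:ℝ) by ring, Real.rpow_neg_one]
  refine ⟨(∫ ω in Ici ωc, S ω / ω^2) + G' 0 * (ωc^p/p)
      + (∫ ω in Ioo (0:ℝ) ωc, ω^(p-2) * R ω) - G 0 * (ωc^(p-1)/(1-p)), C₃, ?_, ?_⟩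
  · -- the limit statement
    have hmain : Tendsto (fun t : ℝ =>
        -(∫ ω in Ici ωc, (S ω / ω^2) * Real.cos (ω*t))
        - G' 0 * (∫ ω in Ioo (0:ℝ) ωc, ω^(p-1) * Real.cos (ω*t))
        - (∫ ω in Ioo (0:ℝ) ωc, ω^(p-2) * R ω * Real.cos (ω*t))
        - G 0 * (t^(1-p) * (∫ u in Ioi (ωc*t), u ^ (p-2) * (1 - Real.cos u)) - ωc^(p-1)/(1-p)))
        atTop (nhds 0) := by
      have h := ((cB.neg.sub (c1.const_mul (G' 0))).sub cR).sub (c0.const_mul (G 0))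
      simpa using h
    apply hmain.congr'
    filter_upwards [eventually_gt_atTop (0:ℝ)] with t ht
    have h1 := idΓ t
    have h2 := idIoo t
    have h3 := idB t
    have h4 := id1 t
    have h5 := idR t
    have h6 := hlp_scale_eq (p := p) hωc ht
    have h7 := hC₃split (ωc*t) (mul_pos hωc ht)
    linear_combination -(h1 + h2 + h3 + G' 0 * h4 + G' 0 * v1 + h5 + G 0 * h6)
      + G 0 * t^(1-p) * h7
  · -- positivity
    intro hS
    have hC₃pos : 0 < C₃ := by
      have hpi : (0:ℝ) < π := Real.pi_pos
      have hsub : Ioc (π/2) π ⊆ Ioi (0:ℝ) := fun u hu => lt_trans (by positivity) hu.1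
      have hintsub : IntegrableOn (fun u : ℝ => u ^ (p-2) * (1 - Real.cos u)) (Ioc (π/2) π) :=
        hf₀int.mono_set hsub
      have hlow : ∀ u ∈ Ioc (π/2) π, π^(p-2) ≤ u ^ (p-2) * (1 - Real.cos u) := by
        intro u hu
        have hu0 : (0:ℝ) < u := hsub hu
        have hu1 : π/2 < u := hu.1
        have hu2 : u ≤ π := hu.2
        have hb : π^(p-2) ≤ u^(p-2) :=
          Real.rpow_le_rpow_of_nonpos hu0 hu2 (by linarith)
        have hcos : Real.cos u ≤ 0 :=
          Real.cos_nonpos_of_pi_div_two_le_of_le hu.1.le (by linarith)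
        calc π^(p-2) = π^(p-2) * 1 := (mul_one _).symm
          _ ≤ u^(p-2) * (1 - Real.cos u) :=
            mul_le_mul hb (by linarith) (by norm_num) (Real.rpow_nonneg hu0.le _)
      have hmeas : (volume (Ioc (π/2) π)).toReal = π/2 := by
        rw [Real.volume_Ioc, ENNReal.toReal_ofReal (by linarith)]
        ring
      have hge := setIntegral_ge_of_const_le_real measurableSet_Ioc
        (by rw [Real.volume_Ioc]; exact ENNReal.ofReal_ne_top) hlow hintsub
      rw [measureReal_def, hmeas] at hge
      have hpos : 0 < π^(p-2) * (π/2) :=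
        mul_pos (Real.rpow_pos_of_pos hpi _) (by linarith)
      have hmono : (∫ u in Ioc (π/2) π, u ^ (p-2) * (1 - Real.cos u)) ≤ C₃ := by
        rw [hC₃def]
        apply setIntegral_mono_set hf₀int
        · filter_upwards [ae_restrict_mem measurableSet_Ioi] with u hu
          exact mul_nonneg (Real.rpow_nonneg (le_of_lt hu) _) (hlp_one_sub_cos_nonneg _)
        · exact HasSubset.Subset.eventuallyLE hsub
      linarith
    have hG0pos : 0 < G 0 := by
      have hne : (nhdsWithin (0:ℝ) (Ioo 0 ωc)).NeBot := by
        apply mem_closure_iff_nhdsWithin_neBot.mp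
        rw [closure_Ioo hωc.ne]
        exact ⟨le_refl _, hωc.le⟩
      have htnd : Tendsto G (nhdsWithin (0:ℝ) (Ioo 0 ωc)) (nhds (G 0)) :=
        (hGcont 0 ⟨le_refl _, hωc⟩).mono_left (nhdsWithin_mono _ Ioo_subset_Ico_self)
      have hev : ∀ᶠ ω in nhdsWithin (0:ℝ) (Ioo 0 ωc), 0 ≤ G ω := by
        filter_upwards [self_mem_nhdsWithin] with ω hω
        have hSω := hS ω hω.1.le
        rw [hfact ω ⟨hω.1.le, hω.2⟩] at hSω
        have hpow : 0 < ω^p := Real.rpow_pos_of_pos hω.1 p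
        nlinarith
      have h0le : (0:ℝ) ≤ G 0 := ge_of_tendsto htnd hev
      exact lt_of_le_of_ne h0le (Ne.symm hG0)
    exact mul_pos hG0pos hC₃pos
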